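/- Fix real numbers S > 0 and ϖ > 0, and define RT(M) = ((M − 1)/(M − 2)) · (1 + ζ(M)·S)/(1 + S) for natural numbers M ≥ 3, where ζ(M) = ζ_even(M) if M is even and ζ(M) = ζ_odd(M) if M is odd. Then lim_{M→∞} RT(M) · (π ϖ)/(2 · ln M) = S/(1 + S). (In the high-SINR regime S → ∞ this factor S/(1+S) tends to 1, recovering the paper's claim that the SINR ratio of the MRC receiver between uncorrelated and correlated fading approaches (2 ln M)/(π ϖ), i.e. that the EAR difference approaches log₂((2 ln M)/(π ϖ)).) -/
import Mathlib

open Filter Real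

/-- `ζ_odd` of equation (37). -/
noncomputable def zetaOdd (ϖ : ℝ) (M : ℕ) : ℝ :=
  1 + (2 / (Real.pi * ϖ)) *
      (Real.eulerMascheroniConstant + Real.log ((⌈(M : ℝ) / 2⌉ : ℝ) - 1))
    + (1 / ϖ - 2 / Real.pi)

/-- `ζ_even` of equation (38). -/
noncomputable def zetaEven (ϖ : ℝ) (M : ℕ) : ℝ :=
  1 + (2 / (Real.pi * ϖ)) *
      (Real.eulerMascheroniConstant + Real.log ((M : ℝ) / 2 - 1))
    + (1 / ϖ - 2 / Real.pi)
    + (4 / (Real.pi * ϖ)) * ((1 + Real.sin (ϖ * M)) / M)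

/-- `ζ(M)`: `ζ_even` for even `M`, `ζ_odd` for odd `M`. -/
noncomputable def zeta (ϖ : ℝ) (M : ℕ) : ℝ :=
  if Even M then zetaEven ϖ M else zetaOdd ϖ M

namespace MrcAux

/-- The log argument: `M/2 - 1` for even `M`, `⌈M/2⌉ - 1` for odd `M`. -/
noncomputable def targ (M : ℕ) : ℝ :=
  if Even M then (M : ℝ) / 2 - 1 else (⌈(M : ℝ) / 2⌉ : ℝ) - 1

/-- The even-correction term. -/
noncomputable def ecorr (ϖ : ℝ) (M : ℕ) : ℝ :=
  if Even M then (4 / (Real.pi * ϖ)) * ((1 + Real.sin (ϖ * M)) / M) else 0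

lemma zeta_eq (ϖ : ℝ) (M : ℕ) :
    zeta ϖ M = (1 + (2 / (Real.pi * ϖ)) * Real.eulerMascheroniConstant
        + (1 / ϖ - 2 / Real.pi))
      + (2 / (Real.pi * ϖ)) * Real.log (targ M) + ecorr ϖ M := by
  by_cases h : Even M <;> simp [zeta, zetaEven, zetaOdd, targ, ecorr, h] <;> ring

lemma logNat_atTop : Tendsto (fun M : ℕ => Real.log M) atTop atTop :=
  Real.tendsto_log_atTop.comp tendsto_natCast_atTop_atTop

lemma invLog_zero : Tendsto (fun M : ℕ => (Real.log M)⁻¹) atTop (nhds 0) :=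
  logNat_atTop.inv_tendsto_atTop

lemma ratio_one : Tendsto (fun M : ℕ => ((M:ℝ)-1)/((M:ℝ)-2)) atTop (nhds 1) := by
  have h2 : Tendsto (fun M : ℕ => ((M:ℝ)-2)) atTop atTop :=
    tendsto_atTop_add_const_right _ _ tendsto_natCast_atTop_atTop
  have h : Tendsto (fun M : ℕ => 1 + ((M:ℝ)-2)⁻¹) atTop (nhds 1) := by
    simpa using tendsto_const_nhds.add h2.inv_tendsto_atTop
  refine h.congr' ?_
  filter_upwards [eventually_ge_atTop 3] with M hM
  have : ((M:ℝ)-2) ≠ 0 := by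
    have : (3:ℝ) ≤ (M:ℝ) := by exact_mod_cast hM
    nlinarith
  field_simp; ring

lemma lowlog : Tendsto (fun M : ℕ => Real.log ((M:ℝ)/2 - 1) / Real.log M) atTop (nhds 1) := by
  have hD : Tendsto (fun M : ℕ => Real.log (((M:ℝ)-2)/M) - Real.log 2) atTop (nhds (-Real.log 2)) := by
    have h1 : Tendsto (fun M : ℕ => ((M:ℝ)-2)/M) atTop (nhds 1) := by
      have : Tendsto (fun M : ℕ => 1 - 2/(M:ℝ)) atTop (nhds 1) := by
        have := Tendsto.const_div_atTop (tendsto_natCast_atTop_atTop (R := ℝ)) 2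
        simpa using tendsto_const_nhds.sub this
      refine this.congr' ?_
      filter_upwards [eventually_ge_atTop 1] with M hM
      have hM0 : (M:ℝ) ≠ 0 := Nat.cast_ne_zero.mpr (by omega)
      field_simp
    have h2 : Tendsto (fun M : ℕ => Real.log (((M:ℝ)-2)/M)) atTop (nhds 0) := by
      simpa using h1.log one_ne_zero
    simpa using h2.sub tendsto_const_nhds
  have hmain : Tendsto (fun M : ℕ => 1 + (Real.log (((M:ℝ)-2)/M) - Real.log 2) * (Real.log M)⁻¹)
      atTop (nhds 1) := by
    simpa using tendsto_const_nhds.add (hD.mul invLog_zero)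
  refine hmain.congr' ?_
  filter_upwards [eventually_ge_atTop 4] with M hM
  have hM4 : (4:ℝ) ≤ (M:ℝ) := by exact_mod_cast hM
  have hM0 : (M:ℝ) ≠ 0 := by linarith
  have hM2 : ((M:ℝ)-2) ≠ 0 := by linarith
  have hlogM : Real.log M ≠ 0 := by
    have : (1:ℝ) < (M:ℝ) := by linarith
    exact ne_of_gt (Real.log_pos this)
  have key : Real.log ((M:ℝ)/2 - 1) = Real.log M + (Real.log (((M:ℝ)-2)/M) - Real.log 2) := by
    have : (M:ℝ)/2 - 1 = (M:ℝ) * (((M:ℝ)-2)/M) / 2 := by field_simp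
    rw [this, Real.log_div (mul_ne_zero hM0 (div_ne_zero hM2 hM0)) two_ne_zero,
      Real.log_mul hM0 (div_ne_zero hM2 hM0)]
    ring
  rw [key]
  field_simp

lemma targ_lograt : Tendsto (fun M : ℕ => Real.log (targ M) / Real.log M) atTop (nhds 1) := by
  refine tendsto_of_tendsto_of_tendsto_of_le_of_le' lowlog tendsto_const_nhds ?_ ?_
  · filter_upwards [eventually_ge_atTop 4] with M hM
    have hM4 : (4:ℝ) ≤ (M:ℝ) := by exact_mod_cast hM
    have hlow : (1:ℝ) ≤ (M:ℝ)/2 - 1 := by linarith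
    have hle : (M:ℝ)/2 - 1 ≤ targ M := by
      unfold targ
      split
      · exact le_rfl
      · have := Int.le_ceil ((M:ℝ)/2)
        linarith
    have hlogpos : 0 < Real.log M := Real.log_pos (by linarith)
    gcongr
  · filter_upwards [eventually_ge_atTop 4] with M hM
    have hM4 : (4:ℝ) ≤ (M:ℝ) := by exact_mod_cast hM
    have hle : targ M ≤ (M:ℝ) := by
      unfold targ
      split
      · linarith
      · have := Int.ceil_lt_add_one ((M:ℝ)/2)
        linarith
    have hlogpos : 0 < Real.log M := Real.log_pos (by linarith)
    rw [div_le_one hlogpos]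
    have htpos : (0:ℝ) < targ M := by
      unfold targ
      split
      · linarith
      · have := Int.le_ceil ((M:ℝ)/2)
        linarith
    exact Real.log_le_log htpos hle

end MrcAux

namespace MrcAux

lemma ecorr_zero {ϖ : ℝ} (hϖ : 0 < ϖ) :
    Tendsto (fun M : ℕ => ecorr ϖ M) atTop (nhds 0) := by
  have hp : 0 < Real.pi * ϖ := mul_pos Real.pi_pos hϖ
  have hub : Tendsto (fun M : ℕ => (8 / (Real.pi * ϖ)) * ((M:ℝ))⁻¹) atTop (nhds 0) := by
    simpa using ((tendsto_natCast_atTop_atTop (R := ℝ)).inv_tendsto_atTop).const_mul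
      (8 / (Real.pi * ϖ))
  refine tendsto_of_tendsto_of_tendsto_of_le_of_le' tendsto_const_nhds hub ?_ ?_
  · filter_upwards [eventually_ge_atTop 1] with M hM
    unfold ecorr
    split
    · have hM0 : (0:ℝ) < (M:ℝ) := by exact_mod_cast hM
      have hs := Real.neg_one_le_sin (ϖ * M)
      apply mul_nonneg (by positivity)
      exact div_nonneg (by linarith) (le_of_lt hM0)
    · exact le_rfl
  · filter_upwards [eventually_ge_atTop 1] with M hM
    have hM0 : (0:ℝ) < (M:ℝ) := by exact_mod_cast hM
    unfold ecorr
    split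
    · have hs := Real.sin_le_one (ϖ * M)
      have hM0' : ((M:ℝ)) ≠ 0 := ne_of_gt hM0
      have hp' : Real.pi * ϖ ≠ 0 := ne_of_gt hp
      have h1 : (4 / (Real.pi * ϖ)) * ((1 + Real.sin (ϖ * M)) / M)
          ≤ (4 / (Real.pi * ϖ)) * (2 / (M:ℝ)) := by
        gcongr
        linarith
      have h2 : (4 / (Real.pi * ϖ)) * (2 / (M:ℝ)) = 8 / (Real.pi * ϖ) * ((M:ℝ))⁻¹ := by
        field_simp
        ring
      exact h1.trans (le_of_eq h2)
    · positivity

lemma hmain {ϖ : ℝ} (hϖ : 0 < ϖ) :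
    Tendsto (fun M : ℕ => zeta ϖ M * (Real.pi * ϖ) / (2 * Real.log M)) atTop (nhds 1) := by
  have hp : 0 < Real.pi * ϖ := mul_pos Real.pi_pos hϖ
  have gen : ∀ (c a e p l : ℝ), p ≠ 0 → l ≠ 0 →
      (c + (2/p)*a + e) * p / (2*l) = (c+e)*(p/2)*l⁻¹ + a/l := by
    intro c a e p l hp hl
    field_simp
    ring
  let C : ℝ := 1 + (2 / (Real.pi * ϖ)) * Real.eulerMascheroniConstant + (1 / ϖ - 2 / Real.pi)
  have h1 : Tendsto (fun M : ℕ =>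
      (C + ecorr ϖ M) * ((Real.pi * ϖ) / 2) * (Real.log M)⁻¹
        + Real.log (targ M) / Real.log M) atTop (nhds 1) := by
    have h0 : Tendsto (fun M : ℕ =>
        (C + ecorr ϖ M) * ((Real.pi * ϖ) / 2) * (Real.log M)⁻¹) atTop (nhds 0) := by
      have := (((tendsto_const_nhds (x := C)).add (ecorr_zero hϖ)).mul
        (tendsto_const_nhds (x := (Real.pi * ϖ) / 2))).mul invLog_zero
      simpa using this
    simpa using h0.add targ_lograt
  refine h1.congr' ?_
  filter_upwards [eventually_ge_atTop 2] with M hM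
  have hlogM : Real.log M ≠ 0 := by
    have : (1:ℝ) < (M:ℝ) := by exact_mod_cast hM
    exact ne_of_gt (Real.log_pos this)
  rw [zeta_eq]
  exact (gen _ _ _ _ _ (ne_of_gt hp) hlogM).symm

end MrcAux

theorem mrc_ufc_cfc_sinr_ratio_asymptotics (S ϖ : ℝ) (hS : 0 < S) (hϖ : 0 < ϖ) :
    Tendsto
      (fun M : ℕ =>
        (((M : ℝ) - 1) / ((M : ℝ) - 2)) * (1 + zeta ϖ M * S) / (1 + S)
          * (Real.pi * ϖ) / (2 * Real.log M))
      atTop (nhds (S / (1 + S))) := by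
  have hX : Tendsto (fun M : ℕ => (Real.pi * ϖ) / (2 * Real.log M)) atTop (nhds 0) := by
    have := MrcAux.invLog_zero.const_mul ((Real.pi * ϖ) / 2)
    refine (by simpa using this : Tendsto _ atTop (nhds (0:ℝ))).congr fun M => by ring
  have h : Tendsto (fun M : ℕ =>
      (((M:ℝ)-1)/((M:ℝ)-2) * ((Real.pi * ϖ) / (2 * Real.log M))
        + S * (((M:ℝ)-1)/((M:ℝ)-2) * (zeta ϖ M * (Real.pi * ϖ) / (2 * Real.log M)))) / (1+S))
      atTop (nhds ((1 * 0 + S * (1 * 1)) / (1+S))) :=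
    ((MrcAux.ratio_one.mul hX).add
      ((MrcAux.ratio_one.mul (MrcAux.hmain hϖ)).const_mul S)).div_const _
  have hval : ((1:ℝ) * 0 + S * (1 * 1)) / (1+S) = S / (1+S) := by ring
  rw [← hval]
  exact Tendsto.congr (fun M => by ring) h
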